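/- Let G = (V, E) be a hypergraph with a linear order < on the edge set E, let 𝒟 ⊆ 𝔅(G, <) be any subset of the set of broken cycles of G, and let f be a function assigning to each edge subset A ⊆ E an element f(G, A) of an additive abelian group, such that for all A ⊆ E and all e ∈ E \ A: if k(G[A]) = k(G[A ∪ {e}]) then f(G, A) = -f(G, A ∪ {e}). Then Σ_{A ⊆ E} f(G, A) = Σ_{A ⊆ E, B ⊄ A for all B ∈ 𝒟} f(G, A). -/

import Mathlib

open scoped Classical

/-- A hypergraph with vertex type `α` and edges indexed by elements of `ι`
(the indexing allows parallel edges, i.e. a multiset of edges). Every edge is a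
nonempty subset of the vertex set. -/
structure IdxHypergraph (α ι : Type*) where
  verts : Finset α
  edges : Finset ι
  inc : ι → Finset α
  inc_nonempty : ∀ i ∈ edges, (inc i).Nonempty
  inc_sub : ∀ i ∈ edges, inc i ⊆ verts

namespace IdxHypergraph

variable {α ι : Type*}

/-- `u` and `v` are connected via a sequence of edges from `E'` in which consecutive
edges share a vertex. -/
def Conn (inc : ι → Finset α) (E' : Finset ι) (u v : α) : Prop :=
  Relation.ReflTransGen (fun a b => ∃ i ∈ E', a ∈ inc i ∧ b ∈ inc i) u v

/-- The number of connected components of the hypergraph with vertex set `V'` and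
edge set `E'` (isolated vertices form their own components). -/
noncomputable def numComponents (inc : ι → Finset α) (V' : Finset α) (E' : Finset ι) : ℕ :=
  (V'.image fun v => V'.filter fun u => Conn inc E' u v).card

/-- `(V₁, E₁)` is a subgraph of `(V₂, E₂)` (w.r.t. the incidence function `inc`). -/
def IsSubgraph (inc : ι → Finset α) (V₁ : Finset α) (E₁ : Finset ι)
    (V₂ : Finset α) (E₂ : Finset ι) : Prop :=
  V₁ ⊆ V₂ ∧ E₁ ⊆ E₂ ∧ ∀ i ∈ E₁, inc i ⊆ V₁

/-- The hypergraph `(V', E')` is δ-cyclic: it has a subgraph with at least one edge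
such that deleting any of its edges does not change the number of connected
components. -/
def IsDeltaCyclic (inc : ι → Finset α) (V' : Finset α) (E' : Finset ι) : Prop :=
  ∃ V'' E'', IsSubgraph inc V'' E'' V' E' ∧ E''.Nonempty ∧
    ∀ i ∈ E'', numComponents inc V'' E'' = numComponents inc V'' (E''.erase i)

/-- The hypergraph `(V', E')` is a δ-cycle: it is δ-cyclic and has no proper
δ-cyclic subgraph. -/
def IsDeltaCycle (inc : ι → Finset α) (V' : Finset α) (E' : Finset ι) : Prop :=
  IsDeltaCyclic inc V' E' ∧
    ∀ V'' E'', IsSubgraph inc V'' E'' V' E' → (V'', E'') ≠ (V', E') →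
      ¬ IsDeltaCyclic inc V'' E''

/-- A proper coloring of `G` with colors in `Fin x`: no edge has all its vertices
mapped to the same color. -/
def ProperColoring (G : IdxHypergraph α ι) (x : ℕ) (φ : G.verts → Fin x) : Prop :=
  ∀ i ∈ G.edges, ¬ ∃ c : Fin x, ∀ v : G.verts, (v : α) ∈ G.inc i → φ v = c

/-- The number of proper `x`-colorings of `G`, i.e. the value `χ(G, x)` of the
chromatic polynomial. -/
noncomputable def chromaticCount (G : IdxHypergraph α ι) (x : ℕ) : ℕ :=
  Nat.card {φ : G.verts → Fin x // G.ProperColoring x φ}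

section Order

variable [LinearOrder ι]

/-- `B` is a broken cycle of `G` w.r.t. the linear order on edges: `B` arises from
deleting the maximal edge of (the edge set of) a δ-cycle that is a subgraph of `G`. -/
def IsBrokenCycle (G : IdxHypergraph α ι) (B : Finset ι) : Prop :=
  ∃ V_C E_C e, IsSubgraph G.inc V_C E_C G.verts G.edges ∧
    IsDeltaCycle G.inc V_C E_C ∧ e ∈ E_C ∧ (∀ i ∈ E_C, i ≤ e) ∧ B = E_C.erase e

/-- The edge `e` closes the broken cycle `B`: `B ∪ {e}` is the edge set of a
δ-cycle in `G`. -/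
def Closes (G : IdxHypergraph α ι) (B : Finset ι) (e : ι) : Prop :=
  ∃ V_C, IsSubgraph G.inc V_C (insert e B) G.verts G.edges ∧
    IsDeltaCycle G.inc V_C (insert e B)

/-- `e` is the minimal edge closing the broken cycle `B`, i.e. `e = e(B)`. -/
def IsMinCloser (G : IdxHypergraph α ι) (B : Finset ι) (e : ι) : Prop :=
  G.Closes B e ∧ ∀ e', G.Closes B e' → e ≤ e'

/-- `e` is the maximal edge closing the broken cycle `B`, i.e. `e = ē(B)`. -/
def IsMaxCloser (G : IdxHypergraph α ι) (B : Finset ι) (e : ι) : Prop :=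
  G.Closes B e ∧ ∀ e', G.Closes B e' → e' ≤ e

/-- `A` contains at least one broken cycle, and
`e = m(A) = min { e(B) : B ∈ 𝔅(G, <), B ⊆ A }`. -/
def IsMinClosingEdge (G : IdxHypergraph α ι) (A : Finset ι) (e : ι) : Prop :=
  (∃ B, G.IsBrokenCycle B ∧ B ⊆ A ∧ G.IsMinCloser B e) ∧
    ∀ B e', G.IsBrokenCycle B → B ⊆ A → G.IsMinCloser B e' → e ≤ e'

end Order

end IdxHypergraph


namespace IdxHypergraph

variable {α ι : Type*}

lemma conn_mono {inc : ι → Finset α} {E₁ E₂ : Finset ι} (hE : E₁ ⊆ E₂) {u v : α} :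
    Conn inc E₁ u v → Conn inc E₂ u v :=
  fun h => Relation.ReflTransGen.mono (r := fun a b => ∃ i ∈ E₁, a ∈ inc i ∧ b ∈ inc i)
    (p := fun a b => ∃ i ∈ E₂, a ∈ inc i ∧ b ∈ inc i)
    (by intro _ _ ⟨i, hi, h1, h2⟩; exact ⟨i, hE hi, h1, h2⟩) u v h

lemma conn_symm {inc : ι → Finset α} {E' : Finset ι} {u v : α} (h : Conn inc E' u v) :
    Conn inc E' v u := by
  have hs : Symmetric fun a b => ∃ i ∈ E', a ∈ inc i ∧ b ∈ inc i :=
    fun a b ⟨i, hi, h1, h2⟩ => ⟨i, hi, h2, h1⟩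
  haveI : Std.Symm fun a b => ∃ i ∈ E', a ∈ inc i ∧ b ∈ inc i := ⟨hs⟩
  exact Std.Symm.symm (r := Relation.ReflTransGen _) _ _ h

lemma conn_of_count_eq {inc : ι → Finset α} {V' : Finset α} {B E_C : Finset ι} {e : ι}
    (hincl : ∀ i ∈ E_C, inc i ⊆ V') (hBE : B ⊆ E_C) (heEC : e ∈ E_C)
    (hk : numComponents inc V' E_C = numComponents inc V' B)
    {u v : α} (hu : u ∈ inc e) (hv : v ∈ inc e) : Conn inc B u v := by
  classical
  set cr : α → Finset α := fun w => V'.filter fun x => Conn inc B x w with hcr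
  set cs : α → Finset α := fun w => V'.filter fun x => Conn inc E_C x w with hcs
  set ψ : Finset α → Finset α :=
    fun X => V'.filter fun x => ∃ w ∈ X, Conn inc E_C x w with hψdef
  have hψ : ∀ w ∈ V', ψ (cr w) = cs w := by
    intro w hw
    ext x
    simp only [hψdef, hcr, hcs, Finset.mem_filter]
    constructor
    · rintro ⟨hx, y, ⟨hy1, hy2⟩, hxy⟩
      exact ⟨hx, hxy.trans (conn_mono hBE hy2)⟩
    · rintro ⟨hx, hxw⟩
      exact ⟨hx, w, ⟨hw, Relation.ReflTransGen.refl⟩, hxw⟩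
  have himg : V'.image cs = (V'.image cr).image ψ := by
    rw [Finset.image_image]
    exact Finset.image_congr (fun w hw => (hψ w hw).symm)
  have hk' : ((V'.image cr).image ψ).card = (V'.image cr).card := by
    rw [← himg]
    exact hk
  have hinj : Set.InjOn ψ (V'.image cr) := Finset.card_image_iff.mp hk'
  have huV : u ∈ V' := hincl e heEC hu
  have hvV : v ∈ V' := hincl e heEC hv
  have hsuv : Conn inc E_C u v := Relation.ReflTransGen.single ⟨e, heEC, hu, hv⟩
  have hcseq : cs u = cs v := by
    ext x
    simp only [hcs, Finset.mem_filter, and_congr_right_iff]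
    intro _
    exact ⟨fun h => h.trans hsuv, fun h => h.trans (conn_symm hsuv)⟩
  have hcreq : cr u = cr v := by
    refine hinj (Finset.mem_image_of_mem cr huV) (Finset.mem_image_of_mem cr hvV) ?_
    rw [hψ u huV, hψ v hvV, hcseq]
  have hvmem : v ∈ cr u := by
    rw [hcreq]
    exact Finset.mem_filter.mpr ⟨hvV, Relation.ReflTransGen.refl⟩
  exact conn_symm (Finset.mem_filter.mp hvmem).2

lemma numComponents_insert_eq [DecidableEq ι] {inc : ι → Finset α} (V : Finset α)
    {A : Finset ι} {e : ι}
    (h : ∀ u ∈ inc e, ∀ v ∈ inc e, Conn inc A u v) :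
    numComponents inc V A = numComponents inc V (insert e A) := by
  have key : ∀ x y : α, Conn inc (insert e A) x y ↔ Conn inc A x y := by
    intro x y
    constructor
    · intro hxy
      induction hxy with
      | refl => exact Relation.ReflTransGen.refl
      | tail hab hstep ih =>
        obtain ⟨i, hi, hb, hc⟩ := hstep
        rcases Finset.mem_insert.mp hi with rfl | hiA
        · exact ih.trans (h _ hb _ hc)
        · exact ih.tail ⟨i, hiA, hb, hc⟩
    · exact conn_mono (Finset.subset_insert _ _)
  unfold numComponents
  have hfe : (fun w => V.filter fun x => Conn inc (insert e A) x w)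
      = fun w => V.filter fun x => Conn inc A x w := by
    funext w
    ext x
    simp only [Finset.mem_filter, key]
  rw [hfe]

lemma erase_insert_inst (inst1 inst2 : DecidableEq ι) (e : ι) (B : Finset ι) (he : e ∉ B) :
    @Finset.erase ι inst2 (@Insert.insert ι (Finset ι) (@Finset.instInsert ι inst1) e B) e = B := by
  have h12 : inst1 = inst2 := by
    funext a b
    exact Subsingleton.elim _ _
  subst h12
  exact Finset.erase_insert he

lemma Closes.numComponents_insert [LinearOrder ι] {G : IdxHypergraph α ι} {B : Finset ι} {e : ι}
    (hc : G.Closes B e) (he : e ∉ B) {A : Finset ι} (hBA : B ⊆ A) :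
    numComponents G.inc G.verts A = numComponents G.inc G.verts (insert e A) := by
  obtain ⟨V_C, hsub, hcyc, hmin⟩ := hc
  obtain ⟨V₂, E₂, hs2, hne, hdel⟩ := hcyc
  have heq : (V₂, E₂) = (V_C, insert e B) := by
    by_contra hne'
    exact hmin V₂ E₂ hs2 hne' ⟨V₂, E₂, ⟨subset_rfl, subset_rfl, hs2.2.2⟩, hne, hdel⟩
  rw [Prod.mk.injEq] at heq
  obtain ⟨rfl, rfl⟩ := heq
  have hdele := hdel e (Finset.mem_insert_self e B)
  rw [erase_insert_inst _ _ e B he] at hdele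
  have hconn : ∀ u ∈ G.inc e, ∀ v ∈ G.inc e, Conn G.inc A u v := by
    intro u hu v hv
    exact conn_mono hBA
      (conn_of_count_eq hsub.2.2 (Finset.subset_insert e B) (Finset.mem_insert_self e B)
        hdele hu hv)
  exact numComponents_insert_eq G.verts hconn

end IdxHypergraph

open IdxHypergraph in
/-- Generalized Broken-cycle Theorem: for any subset `D` of the broken cycles of `G`
and any function `f` into an abelian group satisfying the cancellation condition,
`Σ_{A ⊆ E} f(G, A) = Σ_{A ⊆ E, no B ∈ D with B ⊆ A} f(G, A)`. -/
theorem sum_eq_sum_brokenCycleFree {α ι : Type*} [LinearOrder ι] {M : Type*}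
    [AddCommGroup M] (G : IdxHypergraph α ι)
    (D : Finset (Finset ι)) (hD : ∀ B ∈ D, G.IsBrokenCycle B)
    (f : Finset ι → M)
    (hf : ∀ A ⊆ G.edges, ∀ e ∈ G.edges, e ∉ A →
      numComponents G.inc G.verts A = numComponents G.inc G.verts (insert e A) →
      f A = - f (insert e A)) :
    ∑ A ∈ G.edges.powerset, f A
      = ∑ A ∈ G.edges.powerset.filter fun A => ∀ B ∈ D, ¬ B ⊆ A, f A := by
  classical
  revert hD
  induction D using Finset.strongInduction with
  | H D ih =>
  intro hD
  rcases D.eq_empty_or_nonempty with rfl | hDne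
  · simp
  set cl : Finset ι := G.edges.filter (fun e' => ∃ B ∈ D, G.Closes B e') with hcl
  have hcloser : ∀ B' ∈ D, ∃ ebar ∈ cl, G.Closes B' ebar ∧ ∀ b ∈ B', b < ebar := by
    intro B' hB'
    obtain ⟨V_C, E_C, ebar, hsub, hcyc, hem, hmax, hBeq⟩ := hD B' hB'
    have hins : insert ebar B' = E_C := by rw [hBeq, Finset.insert_erase hem]
    have hclo : G.Closes B' ebar := ⟨V_C, by rw [hins]; exact hsub, by rw [hins]; exact hcyc⟩
    refine ⟨ebar, Finset.mem_filter.mpr ⟨hsub.2.1 hem, B', hB', hclo⟩, hclo, ?_⟩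
    intro b hb
    rw [hBeq] at hb
    exact lt_of_le_of_ne (hmax b (Finset.mem_of_mem_erase hb)) (Finset.ne_of_mem_erase hb)
  have hclne : cl.Nonempty := by
    obtain ⟨B₁, hB₁⟩ := hDne
    obtain ⟨ebar, hebar, -⟩ := hcloser B₁ hB₁
    exact ⟨ebar, hebar⟩
  set e : ι := cl.max' hclne with he
  have hecl : e ∈ cl := cl.max'_mem hclne
  rw [Finset.mem_filter] at hecl
  obtain ⟨heE, B, hBD, hBclose⟩ := hecl
  have hnotmem : ∀ B' ∈ D, e ∉ B' := by
    intro B' hB' hmem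
    obtain ⟨ebar, hebarcl, -, hlt⟩ := hcloser B' hB'
    exact absurd (cl.le_max' ebar hebarcl) (not_le.mpr (hlt e hmem))
  have heB : e ∉ B := hnotmem B hBD
  have hflip : ∀ A : Finset ι, A ⊆ G.edges → B ⊆ A → e ∉ A → f A = - f (insert e A) := by
    intro A hAE hBA heA
    exact hf A hAE e heE heA (hBclose.numComponents_insert heB hBA)
  set T := G.edges.powerset.filter (fun A => (∀ B' ∈ D.erase B, ¬ B' ⊆ A) ∧ B ⊆ A) with hT
  have hTmem : ∀ A, A ∈ T ↔ A ⊆ G.edges ∧ (∀ B' ∈ D.erase B, ¬ B' ⊆ A) ∧ B ⊆ A := by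
    intro A
    simp [hT, Finset.mem_filter, Finset.mem_powerset]
  have hTzero : ∑ A ∈ T, f A = 0 := by
    refine Finset.sum_involution (fun A _ => if e ∈ A then A.erase e else insert e A)
      ?_ ?_ ?_ ?_
    · intro A hA
      obtain ⟨hAE, havoid, hBA⟩ := (hTmem A).mp hA
      by_cases heA : e ∈ A
      · have hBA' : B ⊆ A.erase e := Finset.subset_erase.mpr ⟨hBA, heB⟩
        have h := hflip (A.erase e) ((Finset.erase_subset e A).trans hAE) hBA'
          (Finset.notMem_erase e A)
        rw [Finset.insert_erase heA] at h
        simp only [if_pos heA, h]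
        exact add_neg_cancel (f A)
      · have h := hflip A hAE hBA heA
        simp only [if_neg heA, h]
        exact neg_add_cancel (f (insert e A))
    · intro A hA _
      by_cases heA : e ∈ A
      · simp only [if_pos heA]
        intro hEq
        have hne := Finset.notMem_erase e A
        rw [hEq] at hne
        exact hne heA
      · simp only [if_neg heA]
        intro hEq
        rw [← hEq] at heA
        exact heA (Finset.mem_insert_self e A)
    · intro A hA
      obtain ⟨hAE, havoid, hBA⟩ := (hTmem A).mp hA
      refine (hTmem _).mpr ?_
      by_cases heA : e ∈ A
      · simp only [if_pos heA]
        refine ⟨(Finset.erase_subset e A).trans hAE, ?_, Finset.subset_erase.mpr ⟨hBA, heB⟩⟩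
        intro B' hB' hsub'
        exact havoid B' hB' (hsub'.trans (Finset.erase_subset e A))
      · simp only [if_neg heA]
        refine ⟨Finset.insert_subset heE hAE, ?_, hBA.trans (Finset.subset_insert e A)⟩
        intro B' hB' hsub'
        refine havoid B' hB' (fun x hx => ?_)
        rcases Finset.mem_insert.mp (hsub' hx) with rfl | hxA
        · exact absurd hx (hnotmem B' (Finset.mem_of_mem_erase hB'))
        · exact hxA
    · intro A hA
      by_cases heA : e ∈ A
      · simp only [if_pos heA, Finset.notMem_erase, if_false, ite_false,
          Finset.insert_erase heA, if_neg (Finset.notMem_erase e A)]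
      · simp only [if_neg heA, if_pos (Finset.mem_insert_self e A),
          Finset.erase_insert heA]
  have hIH := ih (D.erase B) (Finset.erase_ssubset hBD)
    (fun B' h => hD B' (Finset.mem_of_mem_erase h))
  rw [hIH]
  have hsplit := Finset.sum_filter_add_sum_filter_not
    (G.edges.powerset.filter (fun A => ∀ B' ∈ D.erase B, ¬ B' ⊆ A)) (fun A => B ⊆ A) f
  have h1 : (G.edges.powerset.filter (fun A => ∀ B' ∈ D.erase B, ¬ B' ⊆ A)).filter
      (fun A => B ⊆ A) = T := by
    rw [hT, Finset.filter_filter]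
  have h2 : (G.edges.powerset.filter (fun A => ∀ B' ∈ D.erase B, ¬ B' ⊆ A)).filter
      (fun A => ¬ B ⊆ A) = G.edges.powerset.filter (fun A => ∀ B' ∈ D, ¬ B' ⊆ A) := by
    rw [Finset.filter_filter]
    apply Finset.filter_congr
    intro A _
    constructor
    · rintro ⟨h', hB⟩ B' hB'
      by_cases hB'B : B' = B
      · exact hB'B ▸ hB
      · exact h' B' (Finset.mem_erase.mpr ⟨hB'B, hB'⟩)
    · intro h
      exact ⟨fun B' h' => h B' (Finset.mem_of_mem_erase h'), h B hBD⟩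
  rw [← hsplit, h1, h2, hTzero, zero_add]
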